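/- Let t > 1 and 0 < θ < (t−1)/(2t). If M, N, P, Q are points in the plane with segments MN and PQ making angle at most θ, the segments intersect at an interior point I, the orthogonal projections of P and Q onto the line through a fixed baseline direction (making angle at most θ with both segments) lie between the projections of M and N, then t·dist(M,P) + dist(P,Q) + t·dist(N,Q) ≤ t·dist(M,N). -/

import Mathlib

noncomputable abbrev P2 := EuclideanSpace ℝ (Fin 2)

lemma quad_aux (t θ : ℝ) (ht : 1 < t) (hθ0 : 0 < θ) (hθ : θ < (t - 1) / (2 * t)) :
    0 ≤ 2 * t ^ 2 * Real.cos θ ^ 2 - 2 * t * Real.cos θ - t ^ 2 + 1 := by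
  have ht0 : (0:ℝ) < t := by linarith
  have hθ2 : θ < (t - 1) / (2 * t) := hθ
  have hθt : 2 * t * θ < t - 1 := by
    rw [lt_div_iff₀ (by positivity)] at hθ2
    linarith
  have hc : 1 - θ ^ 2 / 2 ≤ Real.cos θ := Real.one_sub_sq_div_two_le_cos
  have hc1 : Real.cos θ ≤ 1 := Real.cos_le_one θ
  nlinarith [sq_nonneg θ, sq_nonneg (t - 1), sq_nonneg (2 * t * θ), mul_pos ht0 hθ0,
    sq_nonneg (t * θ), sq_nonneg (1 - Real.cos θ)]

lemma cos_pos_aux (t θ : ℝ) (ht : 1 < t) (hθ0 : 0 < θ) (hθ : θ < (t - 1) / (2 * t)) :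
    0 < Real.cos θ := by
  have ht0 : (0:ℝ) < t := by linarith
  have hhalf : (t - 1) / (2 * t) < 1 / 2 := by
    rw [div_lt_div_iff₀ (by positivity) (by norm_num)]
    linarith
  have hc : 1 - θ ^ 2 / 2 ≤ Real.cos θ := Real.one_sub_sq_div_two_le_cos
  nlinarith

lemma key_aux (t θ : ℝ) (ht : 1 < t) (hθ0 : 0 < θ) (hθ : θ < (t - 1) / (2 * t))
    (u w : P2) (hip : ‖u‖ * ‖w‖ * Real.cos θ ≤ inner ℝ u w)
    (hm : ‖w‖ * Real.cos θ ≤ ‖u‖) :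
    ‖u - w‖ ≤ ‖u‖ - ‖w‖ / t := by
  have ht0 : (0:ℝ) < t := by linarith
  have hQ := quad_aux t θ ht hθ0 hθ
  have hc0 := cos_pos_aux t θ ht hθ0 hθ
  set c := Real.cos θ with hcdef
  set m := ‖u‖ with hmdef
  set p := ‖w‖ with hpdef
  have hp0 : 0 ≤ p := norm_nonneg w
  have hm0 : 0 ≤ m := norm_nonneg u
  have htc : 1 < t * c := by
    by_contra hcon
    push_neg at hcon
    nlinarith [mul_pos ht0 hc0]
  have hge : 0 ≤ m - p / t := by
    have : p / t ≤ p * c := by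
      rw [div_le_iff₀ ht0]
      nlinarith
    linarith [hm, this]
  have hsq : ‖u - w‖ ^ 2 ≤ (m - p / t) ^ 2 := by
    have he : ‖u - w‖ ^ 2 = m ^ 2 - 2 * inner ℝ u w + p ^ 2 := norm_sub_sq_real u w
    rw [he]
    have h1 : m ^ 2 - 2 * (m * p * c) + p ^ 2 ≤ (m - p / t) ^ 2 := by
      have hmp2 : 0 ≤ 2 * t * p * (t * c - 1) * (m - p * c) := by
        apply mul_nonneg
        apply mul_nonneg
        apply mul_nonneg
        · positivity
        · linarith
        · linarith
        · linarith
      have keyfact : 0 ≤ p ^ 2 * (2 * t ^ 2 * c ^ 2 - 2 * t * c - t ^ 2 + 1) :=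
        mul_nonneg (sq_nonneg p) hQ
      have h2 : t ^ 2 * (m ^ 2 - 2 * (m * p * c) + p ^ 2) ≤ (t * m - p) ^ 2 := by
        nlinarith [hmp2, keyfact]
      have h3 : (m - p / t) ^ 2 = (t * m - p) ^ 2 / t ^ 2 := by
        field_simp
      rw [h3, le_div_iff₀ (by positivity)]
      linarith [h2]
    nlinarith [hip]
  nlinarith [norm_nonneg (u - w), hge, hsq]

lemma inner_ge_aux {u w : P2} (hu : u ≠ 0) (hw : w ≠ 0) {θ : ℝ}
    (hθ0 : 0 ≤ θ) (hθpi : θ ≤ Real.pi)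
    (h : InnerProductGeometry.angle u w ≤ θ) :
    ‖u‖ * ‖w‖ * Real.cos θ ≤ inner ℝ u w := by
  have h1 : Real.cos θ ≤ Real.cos (InnerProductGeometry.angle u w) :=
    Real.cos_le_cos_of_nonneg_of_le_pi (InnerProductGeometry.angle_nonneg u w)
      hθpi h
  rw [InnerProductGeometry.cos_angle] at h1
  have hu' : 0 < ‖u‖ := norm_pos_iff.2 hu
  have hw' : 0 < ‖w‖ := norm_pos_iff.2 hw
  calc ‖u‖ * ‖w‖ * Real.cos θ ≤ ‖u‖ * ‖w‖ * ((inner ℝ u w : ℝ) / (‖u‖ * ‖w‖)) := by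
        exact mul_le_mul_of_nonneg_left h1 (by positivity)
    _ = inner ℝ u w := by field_simp

set_option maxHeartbeats 1000000 in
/-- Lemma (intersecting almost-parallel segments are endpoint-ordered): if two
θ-parallel segments MN and PQ (θ < (t−1)/(2t)) intersect at an interior point,
and the orthogonal projections of P and Q onto a baseline direction v (making
angle at most θ with both segments) lie between the projections of M and N,
then t·‖MP‖ + ‖PQ‖ + t·‖NQ‖ ≤ t·‖MN‖. -/
theorem stmt4 (t θ : ℝ) (ht : 1 < t) (hθ0 : 0 < θ) (hθ : θ < (t - 1) / (2 * t))
    (M N P Q I v : P2) (hMN : N ≠ M) (hPQ : Q ≠ P) (hv : ‖v‖ = 1)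
    (hpar : InnerProductGeometry.angle (N - M) (Q - P) ≤ θ)
    (hbase1 : InnerProductGeometry.angle (N - M) v ≤ θ)
    (hbase2 : InnerProductGeometry.angle (Q - P) v ≤ θ)
    (hI : I ∈ openSegment ℝ M N ∩ openSegment ℝ P Q)
    (hP : (inner ℝ P v : ℝ) ∈ Set.uIcc (inner ℝ M v : ℝ) (inner ℝ N v : ℝ))
    (hQ : (inner ℝ Q v : ℝ) ∈ Set.uIcc (inner ℝ M v : ℝ) (inner ℝ N v : ℝ)) :
    t * dist M P + dist P Q + t * dist N Q ≤ t * dist M N := by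
  have ht0 : (0:ℝ) < t := by linarith
  have hc0 := cos_pos_aux t θ ht hθ0 hθ
  have hθpi : θ ≤ Real.pi := by
    have : (t - 1) / (2 * t) < 1 / 2 := by
      rw [div_lt_div_iff₀ (by positivity) (by norm_num)]; linarith
    nlinarith [Real.pi_gt_three]
  have hNM : N - M ≠ 0 := sub_ne_zero.2 hMN
  have hQP : Q - P ≠ 0 := sub_ne_zero.2 hPQ
  have hv0 : v ≠ 0 := by intro h; rw [h, norm_zero] at hv; norm_num at hv
  -- inner ℝ product bounds from the angle hypotheses
  have hipar : ‖N - M‖ * ‖Q - P‖ * Real.cos θ ≤ inner ℝ (N - M) (Q - P) :=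
    inner_ge_aux hNM hQP hθ0.le hθpi hpar
  have hib1 : ‖N - M‖ * Real.cos θ ≤ inner ℝ (N - M) v := by
    have := inner_ge_aux hNM hv0 hθ0.le hθpi hbase1
    rwa [hv, mul_one] at this
  have hib2 : ‖Q - P‖ * Real.cos θ ≤ inner ℝ (Q - P) v := by
    have := inner_ge_aux hQP hv0 hθ0.le hθpi hbase2
    rwa [hv, mul_one] at this
  -- extract the parameters of the intersection point
  obtain ⟨hI1, hI2⟩ := hI
  rw [openSegment_eq_image] at hI1 hI2
  obtain ⟨r, ⟨hr0, hr1⟩, hIr⟩ := hI1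
  obtain ⟨s, ⟨hs0, hs1⟩, hIs⟩ := hI2
  simp only at hIr hIs
  have hMI : M - I = r • (M - N) := by rw [← hIr]; module
  have hNI : N - I = (1 - r) • (N - M) := by rw [← hIr]; module
  have hPI : P - I = s • (P - Q) := by rw [← hIs]; module
  have hQI : Q - I = (1 - s) • (Q - P) := by rw [← hIs]; module
  have hnMI : ‖M - I‖ = r * ‖N - M‖ := by
    rw [hMI, norm_smul, Real.norm_eq_abs, abs_of_pos hr0, norm_sub_rev]
  have hnNI : ‖N - I‖ = (1 - r) * ‖N - M‖ := by
    rw [hNI, norm_smul, Real.norm_eq_abs, abs_of_pos (by linarith : (0:ℝ) < 1 - r)]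
  have hnPI : ‖P - I‖ = s * ‖Q - P‖ := by
    rw [hPI, norm_smul, Real.norm_eq_abs, abs_of_pos hs0, norm_sub_rev]
  have hnQI : ‖Q - I‖ = (1 - s) * ‖Q - P‖ := by
    rw [hQI, norm_smul, Real.norm_eq_abs, abs_of_pos (by linarith : (0:ℝ) < 1 - s)]
  have hnormNM : (0:ℝ) < ‖N - M‖ := norm_pos_iff.2 hNM
  have hnormQP : (0:ℝ) < ‖Q - P‖ := norm_pos_iff.2 hQP
  -- ordering of the projections on v
  have hMltN : (inner ℝ M v : ℝ) < inner ℝ N v := by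
    have h1 : (inner ℝ N v : ℝ) - inner ℝ M v = inner ℝ (N - M) v := (inner_sub_left N M v).symm
    nlinarith [hib1]
  have hPicc : (inner ℝ P v : ℝ) ∈ Set.Icc (inner ℝ M v : ℝ) (inner ℝ N v : ℝ) := by
    rwa [Set.uIcc_of_le hMltN.le] at hP
  have hQicc : (inner ℝ Q v : ℝ) ∈ Set.Icc (inner ℝ M v : ℝ) (inner ℝ N v : ℝ) := by
    rwa [Set.uIcc_of_le hMltN.le] at hQ
  -- inner ℝ (I - P) v = s * inner ℝ (Q-P) v, inner ℝ (I - M) v = r * inner ℝ (N-M) v, etc.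
  have hIP : (inner ℝ (I - P) v : ℝ) = s * inner ℝ (Q - P) v := by
    have : I - P = s • (Q - P) := by rw [← hIs]; module
    rw [this, real_inner_smul_left]
  have hIM : (inner ℝ (I - M) v : ℝ) = r * inner ℝ (N - M) v := by
    have : I - M = r • (N - M) := by rw [← hIr]; module
    rw [this, real_inner_smul_left]
  have hNmI : (inner ℝ (N - I) v : ℝ) = (1 - r) * inner ℝ (N - M) v := by
    rw [hNI, real_inner_smul_left]
  have hQmI : (inner ℝ (Q - I) v : ℝ) = (1 - s) * inner ℝ (Q - P) v := by
    rw [hQI, real_inner_smul_left]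
  -- side M, P : ‖P - I‖ * cos θ ≤ ‖M - I‖
  have hsideMP : ‖P - I‖ * Real.cos θ ≤ ‖M - I‖ := by
    have h1 : (inner ℝ (I - P) v : ℝ) ≤ inner ℝ (I - M) v := by
      rw [inner_sub_left, inner_sub_left]
      linarith [hPicc.1]
    have h2 : s * (‖Q - P‖ * Real.cos θ) ≤ s * inner ℝ (Q - P) v :=
      mul_le_mul_of_nonneg_left hib2 hs0.le
    have h3 : r * inner ℝ (N - M) v ≤ r * (‖N - M‖ * ‖v‖) :=
      mul_le_mul_of_nonneg_left (real_inner_le_norm (N - M) v) hr0.le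
    rw [hnPI, hnMI]
    rw [hv, mul_one] at h3
    rw [hIP, hIM] at h1
    nlinarith
  have hsideNQ : ‖Q - I‖ * Real.cos θ ≤ ‖N - I‖ := by
    have h1 : (inner ℝ (Q - I) v : ℝ) ≤ inner ℝ (N - I) v := by
      rw [inner_sub_left, inner_sub_left]
      linarith [hQicc.2]
    have h2 : (1 - s) * (‖Q - P‖ * Real.cos θ) ≤ (1 - s) * inner ℝ (Q - P) v :=
      mul_le_mul_of_nonneg_left hib2 (by linarith)
    have h3 : (1 - r) * inner ℝ (N - M) v ≤ (1 - r) * (‖N - M‖ * ‖v‖) :=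
      mul_le_mul_of_nonneg_left (real_inner_le_norm (N - M) v) (by linarith)
    rw [hnQI, hnNI]
    rw [hv, mul_one] at h3
    rw [hQmI, hNmI] at h1
    nlinarith
  -- inner ℝ product bounds between the half-segments
  have hipMP : ‖M - I‖ * ‖P - I‖ * Real.cos θ ≤ inner ℝ (M - I) (P - I) := by
    have he : (inner ℝ (M - I) (P - I) : ℝ) = (r * s) * inner ℝ (N - M) (Q - P) := by
      rw [hMI, hPI, real_inner_smul_left, real_inner_smul_right]
      rw [show M - N = -(N - M) by module, show P - Q = -(Q - P) by module,
        inner_neg_neg]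
      ring
    rw [he, hnMI, hnPI]
    nlinarith [mul_le_mul_of_nonneg_left hipar (mul_pos hr0 hs0).le]
  have hipNQ : ‖N - I‖ * ‖Q - I‖ * Real.cos θ ≤ inner ℝ (N - I) (Q - I) := by
    have he : (inner ℝ (N - I) (Q - I) : ℝ) = ((1 - r) * (1 - s)) * inner ℝ (N - M) (Q - P) := by
      rw [hNI, hQI, real_inner_smul_left, real_inner_smul_right]
      ring
    rw [he, hnNI, hnQI]
    nlinarith [mul_le_mul_of_nonneg_left hipar
      (mul_nonneg (by linarith : (0:ℝ) ≤ 1 - r) (by linarith : (0:ℝ) ≤ 1 - s))]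
  -- apply the key lemma on both sides
  have hkey1 : ‖M - P‖ ≤ ‖M - I‖ - ‖P - I‖ / t := by
    have := key_aux t θ ht hθ0 hθ (M - I) (P - I) hipMP hsideMP
    rwa [sub_sub_sub_cancel_right] at this
  have hkey2 : ‖N - Q‖ ≤ ‖N - I‖ - ‖Q - I‖ / t := by
    have := key_aux t θ ht hθ0 hθ (N - I) (Q - I) hipNQ hsideNQ
    rwa [sub_sub_sub_cancel_right] at this
  -- assemble
  have hdPQ : dist P Q = ‖P - I‖ + ‖Q - I‖ := by
    rw [dist_eq_norm, hnPI, hnQI, norm_sub_rev P Q]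
    ring
  have hdMN : dist M N = ‖M - I‖ + ‖N - I‖ := by
    rw [dist_eq_norm, hnMI, hnNI, norm_sub_rev M N]
    ring
  rw [dist_eq_norm, dist_eq_norm N Q, hdPQ, hdMN]
  have e1 : t * ‖M - P‖ ≤ t * ‖M - I‖ - ‖P - I‖ := by
    have := mul_le_mul_of_nonneg_left hkey1 ht0.le
    rw [mul_sub, mul_div_cancel₀ _ (ne_of_gt ht0)] at this
    linarith
  have e2 : t * ‖N - Q‖ ≤ t * ‖N - I‖ - ‖Q - I‖ := by
    have := mul_le_mul_of_nonneg_left hkey2 ht0.le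
    rw [mul_sub, mul_div_cancel₀ _ (ne_of_gt ht0)] at this
    linarith
  linarith
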